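/- Let P be the transition matrix of an irreducible, reversible Markov chain on a finite state space with stationary distribution π and conductance Φ = min over S with 0 < π(S) ≤ 1/2 of (∑_{x∈S,y∉S} π(x)P(x,y))/π(S). Then the second largest eigenvalue λ₁ of P satisfies λ₁ ≥ 1 - 2Φ. -/

import Mathlib

open Matrix Polynomial

section Aux
variable {m : Type*} [Fintype m] [DecidableEq m]

lemma my_stoch_pow (P : Matrix m m ℝ)
    (hP : ∀ x y, 0 ≤ P x y) (hrow : ∀ x, ∑ y, P x y = 1) (k : ℕ) :
    (∀ x y, 0 ≤ (P ^ k) x y) ∧ (∀ x, ∑ y, (P ^ k) x y = 1) := by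
  induction k with
  | zero =>
    constructor
    · intro x y; simp only [pow_zero, Matrix.one_apply]
      split <;> norm_num
    · intro x; simp [pow_zero, Matrix.one_apply]
  | succ k ih =>
    constructor
    · intro x y
      rw [pow_succ, Matrix.mul_apply]
      exact Finset.sum_nonneg fun z _ => mul_nonneg (ih.1 x z) (hP z y)
    · intro x
      simp only [pow_succ, Matrix.mul_apply]
      rw [Finset.sum_comm]
      calc ∑ z, ∑ y, (P ^ k) x z * P z y = ∑ z, (P ^ k) x z * ∑ y, P z y := by
            simp [Finset.mul_sum]
        _ = 1 := by simp [hrow, ih.2 x]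

lemma my_harmonic_const [Nonempty m] (P : Matrix m m ℝ)
    (hP : ∀ x y, 0 ≤ P x y) (hrow : ∀ x, ∑ y, P x y = 1)
    (hirr : ∀ x y, ∃ k : ℕ, 0 < (P ^ k) x y) (h : m → ℝ)
    (hh : P *ᵥ h = h) : ∀ x y, h x = h y := by
  have hpow : ∀ k : ℕ, (P ^ k) *ᵥ h = h := by
    intro k
    induction k with
    | zero => simp
    | succ k ih => rw [pow_succ, ← Matrix.mulVec_mulVec, hh, ih]
  obtain ⟨x₀, -, hx₀⟩ := Finset.exists_max_image Finset.univ h Finset.univ_nonempty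
  have key : ∀ y, h y = h x₀ := by
    intro y
    obtain ⟨k, hk⟩ := hirr x₀ y
    have h1 : ∑ z, (P ^ k) x₀ z * h z = h x₀ := by
      have := congrFun (hpow k) x₀
      simpa [Matrix.mulVec, dotProduct] using this
    have h2 : ∑ z, (P ^ k) x₀ z * h x₀ = h x₀ := by
      rw [← Finset.sum_mul, (my_stoch_pow P hP hrow k).2 x₀, one_mul]
    have hle : ∀ z ∈ Finset.univ, (P ^ k) x₀ z * h z ≤ (P ^ k) x₀ z * h x₀ :=
      fun z _ => mul_le_mul_of_nonneg_left (hx₀ z (Finset.mem_univ z))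
        ((my_stoch_pow P hP hrow k).1 x₀ z)
    have heq := (Finset.sum_eq_sum_iff_of_le hle).1 (h1.trans h2.symm) y (Finset.mem_univ y)
    exact mul_left_cancel₀ (ne_of_gt hk) heq
  intro x y; rw [key x, key y]

lemma my_eval_charpoly (M : Matrix m m ℝ) (t : ℝ) :
    M.charpoly.eval t = (t • (1 : Matrix m m ℝ) - M).det := by
  rw [Matrix.charpoly]
  have : (Polynomial.evalRingHom t) (Matrix.charmatrix M).det
      = ((Matrix.charmatrix M).map (Polynomial.evalRingHom t)).det := RingHom.map_det _ _
  simp only [coe_evalRingHom] at this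
  rw [this]
  congr 1
  ext i j
  by_cases hij : i = j
  · subst hij
    simp [Matrix.charmatrix_apply_eq, Matrix.one_apply]
  · simp [Matrix.charmatrix_apply_ne _ _ _ hij, Matrix.one_apply, hij]

lemma my_orth {A : Matrix m m ℝ} (hA : A.IsHermitian) (i j : m) :
    ∑ x, hA.eigenvectorBasis i x * hA.eigenvectorBasis j x = if i = j then 1 else 0 := by
  have h := hA.eigenvectorBasis.orthonormal
  rw [orthonormal_iff_ite] at h
  simpa [PiLp.inner_apply, RCLike.inner_apply, mul_comm] using h i j

lemma my_expand {A : Matrix m m ℝ} (hA : A.IsHermitian) (f : m → ℝ) (x : m) :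
    f x = ∑ i, (∑ y, hA.eigenvectorBasis i y * f y) * hA.eigenvectorBasis i x := by
  set b := hA.eigenvectorBasis with hb
  have h := b.sum_repr ((WithLp.equiv 2 (m → ℝ)).symm f)
  have hrepr : ∀ i, b.repr ((WithLp.equiv 2 (m → ℝ)).symm f) i = ∑ y, b i y * f y := by
    intro i
    rw [b.repr_apply_apply]
    simp [PiLp.inner_apply, RCLike.inner_apply, mul_comm]
  have h2 := congrFun (congrArg (fun v : EuclideanSpace ℝ m => (v : m → ℝ)) h) x
  simp only [hrepr] at h2
  rw [show f x = (WithLp.equiv 2 (m → ℝ)).symm f x from rfl, ← h2]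
  rw [WithLp.ofLp_sum, Finset.sum_apply]; simp [smul_eq_mul]

end Aux

theorem second_eigenvalue_ge_one_sub_two_conductance (n : ℕ)
    (P : Matrix (Fin (n+2)) (Fin (n+2)) ℝ) (π : Fin (n+2) → ℝ)
    (hP : ∀ x y, 0 ≤ P x y) (hrow : ∀ x, ∑ y, P x y = 1)
    (hπpos : ∀ x, 0 < π x) (hπsum : ∑ x, π x = 1)
    (hrev : ∀ x y, π x * P x y = π y * P y x)
    (hirr : ∀ x y, ∃ k : ℕ, 0 < (P ^ k) x y)
    (Φ : ℝ)
    (hΦ : IsLeast {t : ℝ | ∃ S : Finset (Fin (n+2)),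
      0 < ∑ x ∈ S, π x ∧ (∑ x ∈ S, π x) ≤ 1/2 ∧
      t = (∑ x ∈ S, ∑ y ∈ Sᶜ, π x * P x y) / (∑ x ∈ S, π x)} Φ) :
    ∃ lam : ℝ, lam < 1 ∧ P.charpoly.IsRoot lam ∧ 1 - 2*Φ ≤ lam := by
  classical
  obtain ⟨S, hS0, hShalf, hΦeq⟩ := hΦ.1
  set πS := ∑ x ∈ S, π x with hπSdef
  set Q := ∑ x ∈ S, ∑ y ∈ Sᶜ, π x * P x y with hQdef
  have hQ0 : 0 ≤ Q := Finset.sum_nonneg fun x _ => Finset.sum_nonneg fun y _ =>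
    mul_nonneg (hπpos x).le (hP x y)
  have hQΦ : Q = Φ * πS := by
    rw [hΦeq]; field_simp
  -- square roots
  set d : Fin (n+2) → ℝ := fun x => Real.sqrt (π x) with hddef
  have hdpos : ∀ x, 0 < d x := fun x => Real.sqrt_pos.2 (hπpos x)
  have hdd : ∀ x, d x * d x = π x := fun x => Real.mul_self_sqrt (hπpos x).le
  set A : Matrix (Fin (n+2)) (Fin (n+2)) ℝ := Matrix.of fun x y => d x * P x y / d y
    with hAdef
  have hAxy : ∀ x y, A x y = d x * P x y / d y := fun _ _ => rfl
  have hA : A.IsHermitian := by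
    rw [Matrix.IsHermitian]
    ext x y
    rw [Matrix.conjTranspose_apply, star_trivial, hAxy, hAxy]
    rw [div_eq_div_iff (hdpos x).ne' (hdpos y).ne']
    have h1 : d y * P y x * d y = π y * P y x := by rw [← hdd y]; ring
    have h2 : d x * P x y * d x = π x * P x y := by rw [← hdd x]; ring
    rw [h1, h2, hrev]
  set μ : Fin (n+2) → ℝ := hA.eigenvalues with hμdef
  set u : Fin (n+2) → Fin (n+2) → ℝ := fun i => ⇑(hA.eigenvectorBasis i) with hudef
  have horth : ∀ i j, ∑ x, u i x * u j x = if i = j then 1 else 0 := fun i j => my_orth hA i j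
  have heig : ∀ i, A *ᵥ u i = μ i • u i := fun i => hA.mulVec_eigenvectorBasis i
  -- transfer to P-eigenvectors
  have hPeig : ∀ i, P *ᵥ (fun x => u i x / d x) = μ i • (fun x => u i x / d x) := by
    intro i
    funext x
    have h1 := congrFun (heig i) x
    have hAu : (A *ᵥ u i) x = d x * ∑ y, P x y * (u i y / d y) := by
      rw [Matrix.mulVec, dotProduct, Finset.mul_sum]
      apply Finset.sum_congr rfl
      intro y _
      rw [hAxy]
      field_simp
    have h5 : (μ i • u i) x = μ i * u i x := rfl
    rw [hAu, h5] at h1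
    have h2 : (P *ᵥ fun x => u i x / d x) x = ∑ y, P x y * (u i y / d y) := by
      simp [Matrix.mulVec, dotProduct]
    have h3 : (μ i • fun x => u i x / d x) x = μ i * (u i x / d x) := rfl
    rw [h2, h3, ← mul_div_assoc, eq_div_iff (hdpos x).ne', mul_comm]
    exact h1
  -- each u i is nonzero
  have hune : ∀ i, ∃ x, u i x ≠ 0 := by
    intro i
    by_contra hcon
    push_neg at hcon
    have h := horth i i
    simp [hcon] at h
  -- all eigenvalues are at most 1
  have hμle1 : ∀ i, μ i ≤ 1 := by
    intro i
    set h : Fin (n+2) → ℝ := fun x => u i x / d x with hhdef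
    obtain ⟨x₀, -, hx₀⟩ := Finset.exists_max_image Finset.univ (fun x => |h x|)
      Finset.univ_nonempty
    obtain ⟨xw, hxw⟩ := hune i
    have hhx : 0 < |h x₀| := by
      have h1 : h xw ≠ 0 := div_ne_zero hxw (hdpos xw).ne'
      calc (0:ℝ) < |h xw| := abs_pos.2 h1
        _ ≤ |h x₀| := hx₀ xw (Finset.mem_univ xw)
    have heq := congrFun (hPeig i) x₀
    have h2 : (P *ᵥ h) x₀ = ∑ y, P x₀ y * h y := by simp [Matrix.mulVec, dotProduct]
    have h3 : (μ i • h) x₀ = μ i * h x₀ := rfl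
    rw [h2, h3] at heq
    have h4 : |μ i| * |h x₀| ≤ 1 * |h x₀| := by
      rw [one_mul]
      calc |μ i| * |h x₀| = |∑ y, P x₀ y * h y| := by rw [← abs_mul, heq]
        _ ≤ ∑ y, |P x₀ y * h y| := Finset.abs_sum_le_sum_abs _ _
        _ = ∑ y, P x₀ y * |h y| := by
            apply Finset.sum_congr rfl; intro y _
            rw [abs_mul, abs_of_nonneg (hP x₀ y)]
        _ ≤ ∑ y, P x₀ y * |h x₀| := Finset.sum_le_sum fun y _ =>
            mul_le_mul_of_nonneg_left (hx₀ y (Finset.mem_univ y)) (hP x₀ y)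
        _ = |h x₀| := by rw [← Finset.sum_mul, hrow, one_mul]
    have h5 : |μ i| ≤ 1 := le_of_mul_le_mul_right h4 hhx
    exact le_trans (le_abs_self _) h5
  -- eigenvectors for eigenvalue 1 are multiples of d
  have hcz1 : ∀ i, μ i = 1 → ∃ cst : ℝ, ∀ x, u i x = cst * d x := by
    intro i hi
    have hh : P *ᵥ (fun x => u i x / d x) = (fun x => u i x / d x) := by
      have h := hPeig i; rw [hi] at h; simpa using h
    have hc := my_harmonic_const P hP hrow hirr _ hh
    refine ⟨u i 0 / d 0, fun x => ?_⟩
    have h := hc x 0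
    rw [← h, div_mul_cancel₀ _ (hdpos x).ne']
  -- test function
  set e : Fin (n+2) → ℝ := fun x => if x ∈ S then 1 else 0 with hedef
  set g : Fin (n+2) → ℝ := fun x => e x - πS with hgdef
  set f : Fin (n+2) → ℝ := fun x => d x * g x with hfdef
  set c : Fin (n+2) → ℝ := fun i => ∑ y, u i y * f y with hcdef
  have hexp : ∀ x, f x = ∑ i, c i * u i x := fun x => my_expand hA f x
  have hπSc : ∑ x ∈ Sᶜ, π x = 1 - πS := by
    have h := Finset.sum_add_sum_compl S π
    rw [hπsum] at h
    linarith
  have hπe : ∑ x, π x * e x = πS := by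
    have h : ∀ x, π x * e x = if x ∈ S then π x else 0 := by
      intro x; simp only [hedef]; split <;> simp
    simp only [h, Finset.sum_ite_mem, Finset.univ_inter]; rfl
  have hπg : ∑ x, π x * g x = 0 := by
    have h : ∀ x, π x * g x = π x * e x - πS * π x := by
      intro x; simp only [hgdef]; ring
    simp only [h, Finset.sum_sub_distrib, ← Finset.mul_sum, hπsum, hπe]
    ring
  have hcz : ∀ i, μ i = 1 → c i = 0 := by
    intro i hi
    obtain ⟨cst, hcst⟩ := hcz1 i hi
    have h1 : c i = ∑ y, cst * (π y * g y) := by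
      simp only [hcdef]
      apply Finset.sum_congr rfl
      intro y _
      rw [hcst y]
      simp only [hfdef]
      rw [← hdd y]; ring
    rw [h1, ← Finset.mul_sum, hπg, mul_zero]
  -- expansion identities
  have hswap : ∀ w : Fin (n+2) → ℝ, ∑ x, f x * w x = ∑ i, c i * ∑ x, u i x * w x := by
    intro w
    calc ∑ x, f x * w x = ∑ x, ∑ i, c i * u i x * w x := by
          apply Finset.sum_congr rfl
          intro x _
          rw [hexp x, Finset.sum_mul]
      _ = ∑ i, ∑ x, c i * u i x * w x := Finset.sum_comm
      _ = ∑ i, c i * ∑ x, u i x * w x := by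
          apply Finset.sum_congr rfl
          intro i _
          rw [Finset.mul_sum]
          apply Finset.sum_congr rfl
          intro x _
          ring
  have hdotff : ∑ x, f x * f x = ∑ i, c i * c i := by
    rw [hswap f]
  have hsym : ∀ x y, A x y = A y x := by
    intro x y
    conv_lhs => rw [← hA]
    simp [Matrix.conjTranspose_apply]
  have hAfswap : ∀ i, ∑ x, u i x * (A *ᵥ f) x = μ i * c i := by
    intro i
    calc ∑ x, u i x * (A *ᵥ f) x = ∑ x, ∑ y, u i x * (A x y * f y) := by
          apply Finset.sum_congr rfl; intro x _
          rw [Matrix.mulVec, dotProduct, Finset.mul_sum]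
      _ = ∑ y, ∑ x, u i x * (A x y * f y) := Finset.sum_comm
      _ = ∑ y, (∑ x, A y x * u i x) * f y := by
          apply Finset.sum_congr rfl; intro y _
          rw [Finset.sum_mul]
          apply Finset.sum_congr rfl; intro x _
          rw [hsym x y]; ring
      _ = ∑ y, (A *ᵥ u i) y * f y := by
          apply Finset.sum_congr rfl; intro y _
          congr 1
      _ = ∑ y, μ i * (u i y * f y) := by
          apply Finset.sum_congr rfl; intro y _
          rw [heig i]
          show (μ i • u i) y * f y = _
          rw [Pi.smul_apply, smul_eq_mul]; ring
      _ = μ i * c i := by rw [← Finset.mul_sum]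
  have hdotfAf : ∑ x, f x * (A *ᵥ f) x = ∑ i, μ i * (c i * c i) := by
    rw [hswap (A *ᵥ f)]
    apply Finset.sum_congr rfl
    intro i _
    rw [hAfswap i]; ring
  -- value of the quadratic forms
  have hV : ∑ x, f x * f x = πS * (1 - πS) := by
    have h1 : ∀ x, f x * f x = π x * (g x * g x) := by
      intro x; simp only [hfdef]; rw [← hdd x]; ring
    simp only [h1]
    rw [← Finset.sum_add_sum_compl S]
    have h2 : ∀ x ∈ S, π x * (g x * g x) = π x * ((1-πS)*(1-πS)) := by
      intro x hx; simp only [hgdef, hedef, if_pos hx]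
    have h3 : ∀ x ∈ Sᶜ, π x * (g x * g x) = π x * (πS*πS) := by
      intro x hx; simp only [hgdef, hedef, if_neg (Finset.mem_compl.1 hx)]; ring
    rw [Finset.sum_congr rfl h2, Finset.sum_congr rfl h3, ← Finset.sum_mul, ← Finset.sum_mul,
      hπSc]
    ring
  have hrowsum : ∀ x, ∑ y, π x * P x y = π x := by
    intro x; rw [← Finset.mul_sum, hrow, mul_one]
  have hE4 : ∑ x, ∑ y, π x * P x y = 1 := by simp only [hrowsum]; exact hπsum
  have hE2 : ∑ x, ∑ y, π x * P x y * e x = πS := by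
    have h : ∀ x, ∑ y, π x * P x y * e x = π x * e x := by
      intro x; rw [← Finset.sum_mul, hrowsum]
    simp only [h]; exact hπe
  have hE3 : ∑ x, ∑ y, π x * P x y * e y = πS := by
    rw [Finset.sum_comm]
    have h : ∀ y, ∑ x, π x * P x y * e y = π y * e y := by
      intro y
      have h1 : ∀ x, π x * P x y * e y = π y * P y x * e y := by intro x; rw [hrev]
      simp only [h1]
      rw [← Finset.sum_mul, ← Finset.mul_sum, hrow, mul_one]
    simp only [h]; exact hπe
  have hE1 : ∑ x, ∑ y, π x * P x y * (e x * e y) = πS - Q := by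
    have h1 : ∀ x, ∑ y, π x * P x y * (e x * e y)
        = e x * (π x - ∑ y ∈ Sᶜ, π x * P x y) := by
      intro x
      have h2 : ∀ y, π x * P x y * (e x * e y) = e x * (if y ∈ S then π x * P x y else 0) := by
        intro y; simp only [hedef]
        by_cases hy : y ∈ S <;> simp [hy]
      rw [Finset.sum_congr rfl (fun y _ => h2 y), ← Finset.mul_sum,
        Finset.sum_ite_mem, Finset.univ_inter]
      congr 1
      have h3 := Finset.sum_add_sum_compl S (fun y => π x * P x y)
      rw [hrowsum x] at h3
      linarith
    simp only [h1]
    have h4 : ∀ x, e x * (π x - ∑ y ∈ Sᶜ, π x * P x y)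
        = if x ∈ S then π x - ∑ y ∈ Sᶜ, π x * P x y else 0 := by
      intro x; simp only [hedef]; by_cases hx : x ∈ S <;> simp [hx]
    simp only [h4]
    rw [Finset.sum_ite_mem, Finset.univ_inter, Finset.sum_sub_distrib]
  have hval : ∑ x, f x * (A *ᵥ f) x = πS - Q - πS*πS := by
    have h1 : ∀ x, f x * (A *ᵥ f) x = ∑ y, π x * P x y * (g x * g y) := by
      intro x
      rw [Matrix.mulVec, dotProduct, Finset.mul_sum]
      apply Finset.sum_congr rfl
      intro y _
      have hstep : A x y * f y = d x * P x y * g y := by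
        rw [hAxy]
        simp only [hfdef]
        field_simp [(hdpos y).ne']
      rw [hstep]
      simp only [hfdef]
      rw [← hdd x]
      ring
    simp only [h1]
    have h2 : ∀ x y, π x * P x y * (g x * g y)
        = π x * P x y * (e x * e y) - πS * (π x * P x y * e x)
          - πS * (π x * P x y * e y) + (πS*πS) * (π x * P x y) := by
      intro x y; simp only [hgdef]; ring
    have h3 : ∑ x, ∑ y, (π x * P x y * (e x * e y) - πS * (π x * P x y * e x)
          - πS * (π x * P x y * e y) + (πS*πS) * (π x * P x y))
        = (∑ x, ∑ y, π x * P x y * (e x * e y)) - πS * (∑ x, ∑ y, π x * P x y * e x)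
          - πS * (∑ x, ∑ y, π x * P x y * e y) + (πS*πS) * (∑ x, ∑ y, π x * P x y) := by
      simp only [Finset.sum_add_distrib, Finset.sum_sub_distrib, Finset.mul_sum]
    simp only [h2]
    rw [h3, hE1, hE2, hE3, hE4]
    ring
  have hμsum : ∑ i, μ i * (c i * c i) = πS - Q - πS*πS := by rw [← hdotfAf]; exact hval
  have hcc : ∑ i, c i * c i = πS * (1 - πS) := by rw [← hdotff]; exact hV
  have hVpos : (0:ℝ) < πS * (1 - πS) := by nlinarith
  have hΦ0 : 0 ≤ Φ := by
    rw [hΦeq]; exact div_nonneg hQ0 hS0.le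
  have hcex : ∃ i, c i ≠ 0 := by
    by_contra hcon
    push_neg at hcon
    have h : ∑ i, c i * c i = 0 := by simp [hcon]
    rw [hcc] at h; linarith
  have hTne : (Finset.univ.filter (fun i => c i ≠ 0)).Nonempty := by
    obtain ⟨i, hi⟩ := hcex
    exact ⟨i, Finset.mem_filter.2 ⟨Finset.mem_univ i, hi⟩⟩
  obtain ⟨i₀, hi₀T, hi₀max⟩ := Finset.exists_max_image _ μ hTne
  have hci₀ : c i₀ ≠ 0 := (Finset.mem_filter.1 hi₀T).2
  have hlt1 : μ i₀ < 1 := lt_of_le_of_ne (hμle1 i₀) (fun h => hci₀ (hcz i₀ h))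
  have hsum_le : ∑ i, μ i * (c i * c i) ≤ μ i₀ * ∑ i, c i * c i := by
    rw [Finset.mul_sum]
    apply Finset.sum_le_sum
    intro i _
    by_cases hi : c i = 0
    · simp [hi]
    · exact mul_le_mul_of_nonneg_right
        (hi₀max i (Finset.mem_filter.2 ⟨Finset.mem_univ i, hi⟩)) (mul_self_nonneg _)
  have hlow : (1 - 2*Φ) * (πS * (1-πS)) ≤ ∑ i, μ i * (c i * c i) := by
    rw [hμsum]
    nlinarith [hQΦ, hΦ0, hS0, hShalf]
  have hge : 1 - 2*Φ ≤ μ i₀ := by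
    rw [hcc] at hsum_le
    exact le_of_mul_le_mul_right (le_trans hlow hsum_le) hVpos
  -- μ i₀ is a root of the characteristic polynomial of P
  have hu0 : u i₀ ≠ 0 := by
    intro hcon
    have h := horth i₀ i₀
    rw [hcon] at h
    simp at h
  have hker : (A - μ i₀ • 1) *ᵥ u i₀ = 0 := by
    rw [Matrix.sub_mulVec, heig i₀, Matrix.smul_mulVec, Matrix.one_mulVec, sub_self]
  have hdetA : (A - μ i₀ • 1).det = 0 :=
    Matrix.exists_mulVec_eq_zero_iff.1 ⟨u i₀, hu0, hker⟩
  have hconj : A - μ i₀ • 1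
      = Matrix.diagonal d * (P - μ i₀ • 1) * Matrix.diagonal (fun x => (d x)⁻¹) := by
    ext x y
    rw [Matrix.mul_diagonal, Matrix.diagonal_mul]
    simp only [Matrix.sub_apply, Matrix.smul_apply, Matrix.one_apply, hAxy, smul_eq_mul]
    by_cases hxy : x = y
    · subst hxy; simp only [if_pos rfl]; field_simp [(hdpos x).ne']
    · simp only [if_neg hxy, mul_zero, sub_zero]; ring
  have hdetP : (P - μ i₀ • 1).det = 0 := by
    have h1 := hdetA
    rw [hconj, Matrix.det_mul, Matrix.det_mul, Matrix.det_diagonal, Matrix.det_diagonal] at h1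
    have h2 : (∏ x, d x) ≠ 0 := Finset.prod_ne_zero_iff.2 fun x _ => (hdpos x).ne'
    have h3 : (∏ x : Fin (n+2), (d x)⁻¹) ≠ 0 :=
      Finset.prod_ne_zero_iff.2 fun x _ => inv_ne_zero (hdpos x).ne'
    rcases mul_eq_zero.1 h1 with h | h
    · rcases mul_eq_zero.1 h with h' | h'
      · exact absurd h' h2
      · exact h'
    · exact absurd h h3
  refine ⟨μ i₀, hlt1, ?_, hge⟩
  show P.charpoly.eval (μ i₀) = 0
  rw [my_eval_charpoly,
    show μ i₀ • (1 : Matrix (Fin (n+2)) (Fin (n+2)) ℝ) - P = -(P - μ i₀ • 1) from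
      (neg_sub _ _).symm,
    Matrix.det_neg, hdetP, mul_zero]
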